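/- Let 0 < L < U, θ = U/L, γ ∈ (1, θ], and η ≥ 1. If (L/γ)·[(θ-1)·ln((θ-1)/(γ-1)) - (θ-γ)] ≤ (η - 1)U/η (with the left side interpreted as 0 when γ = θ), then η ≥ θ / [θ/γ + (θ - 1)(1 - (1/γ)·ln((θ - 1)/(γ - 1)))]. -/

import Mathlib

theorem stmt_9 (L U θ γ η : ℝ) (hL : 0 < L) (hLU : L < U) (hθ : θ = U / L)
    (hγ : γ ∈ Set.Ioc 1 θ) (hη : 1 ≤ η)
    (h : (L / γ) * ((θ - 1) * Real.log ((θ - 1) / (γ - 1)) - (θ - γ))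
          ≤ (η - 1) * U / η) :
    η ≥ θ / (θ / γ + (θ - 1) * (1 - (1 / γ) * Real.log ((θ - 1) / (γ - 1)))) := by
  obtain ⟨hγ1, hγθ⟩ := hγ
  have hη0 : (0:ℝ) < η := lt_of_lt_of_le one_pos hη
  have hγ0 : (0:ℝ) < γ := lt_trans one_pos hγ1
  have hθ1 : (1:ℝ) < θ := by rw [hθ]; exact (one_lt_div hL).2 hLU
  have hU : U = θ * L := by rw [hθ]; field_simp
  set X := Real.log ((θ - 1) / (γ - 1)) with hX
  have key : θ / η ≤ θ / γ + (θ - 1) * (1 - (1 / γ) * X) := by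
    rw [hU] at h
    rw [le_div_iff₀ hη0] at h
    rw [div_le_iff₀ hη0]
    have hc : L * ((θ - 1) * X - (θ - γ)) * η ≤ (η - 1) * (θ * L) * γ := by
      have := mul_le_mul_of_nonneg_left h hγ0.le
      calc L * ((θ - 1) * X - (θ - γ)) * η
          = γ * (L / γ * ((θ - 1) * X - (θ - γ)) * η) := by field_simp
        _ ≤ γ * ((η - 1) * (θ * L)) := this
        _ = (η - 1) * (θ * L) * γ := by ring
    have hgoal : θ * γ ≤ (θ + γ * (θ - 1) - (θ - 1) * X) * η := by
      nlinarith [hc, hL]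
    have : θ ≤ (θ + γ * (θ - 1) - (θ - 1) * X) * η / γ := by
      rw [le_div_iff₀ hγ0]; linarith
    calc θ ≤ (θ + γ * (θ - 1) - (θ - 1) * X) * η / γ := this
      _ = (θ / γ + (θ - 1) * (1 - 1 / γ * X)) * η := by field_simp; ring
  have hD : 0 < θ / γ + (θ - 1) * (1 - (1 / γ) * X) :=
    lt_of_lt_of_le (div_pos (lt_trans one_pos hθ1) hη0) key
  rw [ge_iff_le, div_le_iff₀ hD]
  have := mul_le_mul_of_nonneg_right key (le_of_lt hη0)
  rw [div_mul_cancel₀ _ (ne_of_gt hη0)] at this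
  linarith [this]
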